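/- arXiv:2310.07333 — 6 statements merged into one kernel-verified Lean document; each statement's English description precedes it below -/
import Mathlib

section
/- Let g : [-1,1]^2 → ℝ^2 be 1-Lipschitz-continuous (max norm) and define f : [-1,1]^3 → ℝ^3 by f_1(x) = g_1(x_1,x_3) + 2(x_1 - trunc(2x_2 - x_3)), f_2(x) = 2x_2 - x_1 - x_3, f_3(x) = g_2(x_1,x_3) + 2(x_3 - trunc(2x_2 - x_1)), where trunc(t) = min(1, max(-1, t)). If g is positive-switching on [-1,1]^2, then f is positive-switching on [-1,1]^3. -/
/-- Reduction from 2d to 3d (Claim in Prop. 1.6): if `g = (g₁,g₂)` is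
1-Lipschitz (max norm) and positive-switching on `[-1,1]²`, then the
3-dimensional function `f` defined via `g` and truncation is
positive-switching on `[-1,1]³`. -/
theorem reduction_positive_switching
    (g1 g2 : ℝ → ℝ → ℝ)
    (hlip : ∀ u v u' v' : ℝ, u ∈ Set.Icc (-1:ℝ) 1 → v ∈ Set.Icc (-1:ℝ) 1 →
      u' ∈ Set.Icc (-1:ℝ) 1 → v' ∈ Set.Icc (-1:ℝ) 1 →
      |g1 u v - g1 u' v'| ≤ max |u - u'| |v - v'| ∧
      |g2 u v - g2 u' v'| ≤ max |u - u'| |v - v'|)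
    (hswitch : ∀ u v : ℝ, u ∈ Set.Icc (-1:ℝ) 1 → v ∈ Set.Icc (-1:ℝ) 1 →
      (u = -1 → g1 u v ≤ 0) ∧ (u = 1 → 0 ≤ g1 u v) ∧
      (v = -1 → g2 u v ≤ 0) ∧ (v = 1 → 0 ≤ g2 u v))
    (trunc : ℝ → ℝ) (htrunc : ∀ t, trunc t = min 1 (max (-1) t))
    (f1 f2 f3 : ℝ → ℝ → ℝ → ℝ)
    (hf1 : ∀ x1 x2 x3, f1 x1 x2 x3 = g1 x1 x3 + 2 * (x1 - trunc (2 * x2 - x3)))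
    (hf2 : ∀ x1 x2 x3, f2 x1 x2 x3 = 2 * x2 - x1 - x3)
    (hf3 : ∀ x1 x2 x3, f3 x1 x2 x3 = g2 x1 x3 + 2 * (x3 - trunc (2 * x2 - x1))) :
    ∀ x1 x2 x3 : ℝ, x1 ∈ Set.Icc (-1:ℝ) 1 → x2 ∈ Set.Icc (-1:ℝ) 1 →
      x3 ∈ Set.Icc (-1:ℝ) 1 →
      (x1 = -1 → f1 x1 x2 x3 ≤ 0) ∧ (x1 = 1 → 0 ≤ f1 x1 x2 x3) ∧
      (x2 = -1 → f2 x1 x2 x3 ≤ 0) ∧ (x2 = 1 → 0 ≤ f2 x1 x2 x3) ∧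
      (x3 = -1 → f3 x1 x2 x3 ≤ 0) ∧ (x3 = 1 → 0 ≤ f3 x1 x2 x3) := by
  intro x1 x2 x3 h1 h2 h3
  obtain ⟨h1l, h1r⟩ := h1
  obtain ⟨h2l, h2r⟩ := h2
  obtain ⟨h3l, h3r⟩ := h3
  have htl : ∀ t, -1 ≤ trunc t := by
    intro t; rw [htrunc]
    rcases le_total 1 (max (-1) t) with h | h
    · simp [min_eq_left h]
    · simp [min_eq_right h]
  have htr : ∀ t, trunc t ≤ 1 := by
    intro t; rw [htrunc]; exact min_le_left _ _
  refine ⟨?_, ?_, ?_, ?_, ?_, ?_⟩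
  · intro hx; subst hx
    rw [hf1]
    have := (hswitch (-1) x3 (by constructor <;> linarith) ⟨h3l, h3r⟩).1 rfl
    have := htl (2 * x2 - x3)
    linarith
  · intro hx; subst hx
    rw [hf1]
    have := (hswitch 1 x3 (by constructor <;> linarith) ⟨h3l, h3r⟩).2.1 rfl
    have := htr (2 * x2 - x3)
    linarith
  · intro hx; subst hx; rw [hf2]; linarith
  · intro hx; subst hx; rw [hf2]; linarith
  · intro hx; subst hx
    rw [hf3]
    have := (hswitch x1 (-1) ⟨h1l, h1r⟩ (by constructor <;> linarith)).2.2.1 rfl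
    have := htl (2 * x2 - x1)
    linarith
  · intro hx; subst hx
    rw [hf3]
    have := (hswitch x1 1 ⟨h1l, h1r⟩ (by constructor <;> linarith)).2.2.2 rfl
    have := htr (2 * x2 - x1)
    linarith
end

section
/- Let g : [-1,1]^2 → ℝ^2 be 1-Lipschitz-continuous (max norm), and define f : [-1,1]^3 → ℝ^3 by f_1(x) = g_1(x_1,x_3) + 2(x_1 - trunc(2x_2 - x_3)), f_2(x) = 2x_2 - x_1 - x_3, f_3(x) = g_2(x_1,x_3) + 2(x_3 - trunc(2x_2 - x_1)), with trunc(t) = min(1, max(-1,t)). Then f_1 is weakly increasing in x_1 and weakly decreasing in x_2; f_2 is weakly increasing in x_2 and weakly decreasing in x_1 and in x_3; and f_3 is weakly increasing in x_3 and weakly decreasing in x_2. -/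
/-- Monotonicity properties of the 3-dimensional function built from a
1-Lipschitz 2-dimensional function `g` (Claim in Prop. 1.6):
`f₁` is weakly increasing in `x₁` and decreasing in `x₂`; `f₂` is increasing
in `x₂` and decreasing in `x₁` and `x₃`; `f₃` is increasing in `x₃` and
decreasing in `x₂`.  All monotonicities are for the other coordinates fixed
in `[-1,1]`. -/
theorem reduction_monotonicity
    (g1 g2 : ℝ → ℝ → ℝ)
    (hlip : ∀ u v u' v' : ℝ, u ∈ Set.Icc (-1:ℝ) 1 → v ∈ Set.Icc (-1:ℝ) 1 →
      u' ∈ Set.Icc (-1:ℝ) 1 → v' ∈ Set.Icc (-1:ℝ) 1 →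
      |g1 u v - g1 u' v'| ≤ max |u - u'| |v - v'| ∧
      |g2 u v - g2 u' v'| ≤ max |u - u'| |v - v'|)
    (trunc : ℝ → ℝ) (htrunc : ∀ t, trunc t = min 1 (max (-1) t))
    (f1 f2 f3 : ℝ → ℝ → ℝ → ℝ)
    (hf1 : ∀ x1 x2 x3, f1 x1 x2 x3 = g1 x1 x3 + 2 * (x1 - trunc (2 * x2 - x3)))
    (hf2 : ∀ x1 x2 x3, f2 x1 x2 x3 = 2 * x2 - x1 - x3)
    (hf3 : ∀ x1 x2 x3, f3 x1 x2 x3 = g2 x1 x3 + 2 * (x3 - trunc (2 * x2 - x1))) :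
    ∀ x1 x2 x3 x1' x2' x3' : ℝ,
      x1 ∈ Set.Icc (-1:ℝ) 1 → x2 ∈ Set.Icc (-1:ℝ) 1 → x3 ∈ Set.Icc (-1:ℝ) 1 →
      x1' ∈ Set.Icc (-1:ℝ) 1 → x2' ∈ Set.Icc (-1:ℝ) 1 → x3' ∈ Set.Icc (-1:ℝ) 1 →
      (x1 ≤ x1' → f1 x1 x2 x3 ≤ f1 x1' x2 x3) ∧
      (x2 ≤ x2' → f1 x1 x2' x3 ≤ f1 x1 x2 x3) ∧
      (x2 ≤ x2' → f2 x1 x2 x3 ≤ f2 x1 x2' x3) ∧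
      (x1 ≤ x1' → f2 x1' x2 x3 ≤ f2 x1 x2 x3) ∧
      (x3 ≤ x3' → f2 x1 x2 x3' ≤ f2 x1 x2 x3) ∧
      (x3 ≤ x3' → f3 x1 x2 x3 ≤ f3 x1 x2 x3') ∧
      (x2 ≤ x2' → f3 x1 x2' x3 ≤ f3 x1 x2 x3) := by
  intro x1 x2 x3 x1' x2' x3' h1 h2 h3 h1' h2' h3'
  have htm : ∀ a b : ℝ, a ≤ b → trunc a ≤ trunc b := by
    intro a b hab
    rw [htrunc, htrunc]
    exact min_le_min le_rfl (max_le_max le_rfl hab)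
  refine ⟨?_, ?_, ?_, ?_, ?_, ?_, ?_⟩
  · intro h
    rw [hf1, hf1]
    have hg := (hlip x1 x3 x1' x3 h1 h3 h1' h3).1
    have := abs_le.mp hg
    have habs : |x1 - x1'| = x1' - x1 := by
      rw [abs_sub_comm]; exact abs_of_nonneg (by linarith)
    rw [habs, sub_self, abs_zero] at this
    have hmax : max (x1' - x1) 0 = x1' - x1 := max_eq_left (by linarith)
    rw [hmax] at this
    linarith [this.1, this.2]
  · intro h
    rw [hf1, hf1]
    have := htm (2 * x2 - x3) (2 * x2' - x3) (by linarith)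
    linarith
  · intro h
    rw [hf2, hf2]; linarith
  · intro h
    rw [hf2, hf2]; linarith
  · intro h
    rw [hf2, hf2]; linarith
  · intro h
    rw [hf3, hf3]
    have hg := (hlip x1 x3 x1 x3' h1 h3 h1 h3').2
    have := abs_le.mp hg
    have habs : |x3 - x3'| = x3' - x3 := by
      rw [abs_sub_comm]; exact abs_of_nonneg (by linarith)
    rw [habs, sub_self, abs_zero] at this
    have hmax : max 0 (x3' - x3) = x3' - x3 := max_eq_right (by linarith)
    rw [hmax] at this
    linarith [this.1, this.2]
  · intro h
    rw [hf3, hf3]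
    have := htm (2 * x2 - x1) (2 * x2' - x1) (by linarith)
    linarith
end

section
/- Let g : [-1,1]^2 → ℝ^2 and define f : [-1,1]^3 → ℝ^3 by f_1(x) = g_1(x_1,x_3) + 2(x_1 - trunc(2x_2 - x_3)), f_2(x) = 2x_2 - x_1 - x_3, f_3(x) = g_2(x_1,x_3) + 2(x_3 - trunc(2x_2 - x_1)), where trunc(t) = min(1, max(-1,t)). If x = (x_1,x_2,x_3) ∈ [-1,1]^3 is an ε-root of f (i.e., |f_i(x)| ≤ ε for all i), then (x_1,x_3) is a 3ε-root of g (i.e., |g_i(x_1,x_3)| ≤ 3ε for i = 1,2). -/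
lemma trunc_close (t x ε : ℝ) (hx : -1 ≤ x) (hx' : x ≤ 1) (h : |t - x| ≤ ε) :
    |min 1 (max (-1) t) - x| ≤ ε := by
  rw [abs_le] at h ⊢
  rcases le_total t (-1) with k | k <;> rcases le_total 1 t with k' | k' <;>
    constructor <;>
    simp [min_def, max_def] <;> split_ifs <;> linarith
/-- If `x = (x₁,x₂,x₃) ∈ [-1,1]³` is an ε-root of the 3-dimensional function
`f` built from `g`, then `(x₁,x₃)` is a 3ε-root of `g` (Claim in Prop. 1.6). -/
theorem eps_root_of_reduction
    (g1 g2 : ℝ → ℝ → ℝ)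
    (trunc : ℝ → ℝ) (htrunc : ∀ t, trunc t = min 1 (max (-1) t))
    (f1 f2 f3 : ℝ → ℝ → ℝ → ℝ)
    (hf1 : ∀ x1 x2 x3, f1 x1 x2 x3 = g1 x1 x3 + 2 * (x1 - trunc (2 * x2 - x3)))
    (hf2 : ∀ x1 x2 x3, f2 x1 x2 x3 = 2 * x2 - x1 - x3)
    (hf3 : ∀ x1 x2 x3, f3 x1 x2 x3 = g2 x1 x3 + 2 * (x3 - trunc (2 * x2 - x1)))
    (ε : ℝ) (hε : 0 ≤ ε)
    (x1 x2 x3 : ℝ) (hx1 : x1 ∈ Set.Icc (-1:ℝ) 1) (hx2 : x2 ∈ Set.Icc (-1:ℝ) 1)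
    (hx3 : x3 ∈ Set.Icc (-1:ℝ) 1)
    (h1 : |f1 x1 x2 x3| ≤ ε) (h2 : |f2 x1 x2 x3| ≤ ε) (h3 : |f3 x1 x2 x3| ≤ ε) :
    |g1 x1 x3| ≤ 3 * ε ∧ |g2 x1 x3| ≤ 3 * ε := by
  rw [hf1, htrunc] at h1; rw [hf2] at h2; rw [hf3, htrunc] at h3
  obtain ⟨a1, b1⟩ := hx1
  obtain ⟨a3, b3⟩ := hx3
  have c1 : |min 1 (max (-1) (2 * x2 - x3)) - x1| ≤ ε := by
    apply trunc_close _ _ _ a1 b1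
    rw [abs_le] at h2 ⊢; constructor <;> linarith [h2.1, h2.2]
  have c3 : |min 1 (max (-1) (2 * x2 - x1)) - x3| ≤ ε := by
    apply trunc_close _ _ _ a3 b3
    rw [abs_le] at h2 ⊢; constructor <;> linarith [h2.1, h2.2]
  simp only [abs_le] at h1 h3 c1 c3 ⊢
  exact ⟨⟨by linarith [h1.1, c1.2], by linarith [h1.2, c1.1]⟩,
         ⟨by linarith [h3.1, c3.2], by linarith [h3.2, c3.1]⟩⟩
end

section
/- Let g : [-1,1] → ℝ be 1-Lipschitz and define f : [-1,1]^2 → ℝ^2 by f_1(x) = g(x_1) + 2(x_1 - x_2) and f_2(x) = x_2 - x_1. Then: (a) f_1 is weakly increasing in x_1 and weakly decreasing in x_2, f_2 is weakly increasing in x_2 and weakly decreasing in x_1; (b) if g has a root x ∈ [-1,1], then (x, x) is a root of f; (c) if (x_1, x_2) is an ε-root of f, then x_1 is a 3ε-root of g. -/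
/-- Reduction from 1d root-finding to 2d monotone root-finding
(Prop. 1.7): with `f₁(x) = g(x₁) + 2(x₁ - x₂)` and `f₂(x) = x₂ - x₁`:
(a) all four monotonicity conditions hold; (b) a root `x` of `g` gives the
root `(x,x)` of `f`; (c) an ε-root of `f` gives a 3ε-root of `g`. -/
theorem reduction_1d_to_2d
    (g : ℝ → ℝ)
    (hlip : ∀ s t : ℝ, s ∈ Set.Icc (-1:ℝ) 1 → t ∈ Set.Icc (-1:ℝ) 1 →
      |g s - g t| ≤ |s - t|)
    (f1 f2 : ℝ → ℝ → ℝ)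
    (hf1 : ∀ x1 x2, f1 x1 x2 = g x1 + 2 * (x1 - x2))
    (hf2 : ∀ x1 x2, f2 x1 x2 = x2 - x1) :
    -- (a) monotonicity
    (∀ x1 x1' x2 x2' : ℝ, x1 ∈ Set.Icc (-1:ℝ) 1 → x1' ∈ Set.Icc (-1:ℝ) 1 →
      x2 ∈ Set.Icc (-1:ℝ) 1 → x2' ∈ Set.Icc (-1:ℝ) 1 →
      (x1 ≤ x1' → f1 x1 x2 ≤ f1 x1' x2) ∧
      (x2 ≤ x2' → f1 x1 x2' ≤ f1 x1 x2) ∧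
      (x2 ≤ x2' → f2 x1 x2 ≤ f2 x1 x2') ∧
      (x1 ≤ x1' → f2 x1' x2 ≤ f2 x1 x2)) ∧
    -- (b) roots transfer
    (∀ x : ℝ, x ∈ Set.Icc (-1:ℝ) 1 → g x = 0 → f1 x x = 0 ∧ f2 x x = 0) ∧
    -- (c) approximate roots transfer
    (∀ ε : ℝ, 0 ≤ ε → ∀ x1 x2 : ℝ, x1 ∈ Set.Icc (-1:ℝ) 1 → x2 ∈ Set.Icc (-1:ℝ) 1 →
      |f1 x1 x2| ≤ ε → |f2 x1 x2| ≤ ε → |g x1| ≤ 3 * ε) := by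
  refine ⟨?_, ?_, ?_⟩
  · intro x1 x1' x2 x2' h1 h1' h2 h2'
    refine ⟨?_, ?_, ?_, ?_⟩
    · intro h
      have := hlip x1 x1' h1 h1'
      rw [abs_sub_le_iff] at this
      rw [hf1, hf1]
      have h3 : |x1 - x1'| = x1' - x1 := by
        rw [abs_sub_comm, abs_of_nonneg (by linarith)]
      rw [h3] at this
      nlinarith [this.1, this.2]
    · intro h; rw [hf1, hf1]; nlinarith
    · intro h; rw [hf2, hf2]; linarith
    · intro h; rw [hf2, hf2]; linarith
  · intro x hx hg
    rw [hf1, hf2, hg]; constructor <;> ring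
  · intro ε hε x1 x2 h1 h2 ha hb
    rw [hf1] at ha; rw [hf2] at hb
    rw [abs_le] at ha hb ⊢
    constructor <;> nlinarith [ha.1, ha.2, hb.1, hb.2]
end

section
/- Let d ≥ 2, δ > 0, and let Z be the grid of points in a box [a,b] ⊆ ℝ^d whose coordinates are integer multiples of δ (with all b_i - a_i integer multiples of δ). Let f : Z → {-1,0,1}^d be δ-continuous (values at adjacent grid points differ by at most 1 in each coordinate) and suppose f_i is weakly decreasing in x_j for all i ≠ j. Define h : Z → ℝ^d by h(x) = x - δ·f(x). Then h is order-preserving with respect to the componentwise partial order: x ≤ x' (componentwise) implies h(x) ≤ h(x') (componentwise). -/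
/-- Membership in the δ-grid on the box `[a,b] ⊆ ℝ^d`: every coordinate is of
the form `a i + k·δ` and at most `b i`. -/
def onGrid {d : ℕ} (a b : Fin d → ℝ) (δ : ℝ) (x : Fin d → ℝ) : Prop :=
  ∀ i, (∃ k : ℕ, x i = a i + k * δ) ∧ x i ≤ b i

/-- Claim 4.3: if `f : Z → {-1,0,1}^d` is δ-continuous on the grid and
satisfies all ex-diagonal monotonicity conditions (`f_i` weakly decreasing in
`x_j` for `i ≠ j`), then `h(x) = x - δ·f(x)` is order-preserving with respect
to the componentwise order. -/
theorem h_order_preserving {d : ℕ} (hd : 2 ≤ d) (δ : ℝ) (hδ : 0 < δ)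
    (a b : Fin d → ℝ) (hbox : ∀ i, ∃ m : ℕ, b i = a i + m * δ)
    (f : (Fin d → ℝ) → Fin d → ℤ)
    (hval : ∀ x, onGrid a b δ x → ∀ i, f x i = -1 ∨ f x i = 0 ∨ f x i = 1)
    (hcont : ∀ x, onGrid a b δ x → ∀ j, onGrid a b δ (Function.update x j (x j + δ)) →
      ∀ i, |f (Function.update x j (x j + δ)) i - f x i| ≤ 1)
    (hmono : ∀ x x', onGrid a b δ x → onGrid a b δ x' →
      ∀ j, (∀ k, k ≠ j → x' k = x k) → x j ≤ x' j → ∀ i, i ≠ j → f x' i ≤ f x i) :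
    ∀ x x', onGrid a b δ x → onGrid a b δ x' → (∀ i, x i ≤ x' i) →
      ∀ i, x i - δ * f x i ≤ x' i - δ * f x' i := by
  -- one step: increase coordinate j by δ
  have step : ∀ y, onGrid a b δ y → ∀ j, onGrid a b δ (Function.update y j (y j + δ)) →
      ∀ i, y i - δ * f y i ≤
        Function.update y j (y j + δ) i - δ * f (Function.update y j (y j + δ)) i := by
    intro y hy j hy' i
    by_cases hij : i = j
    · subst hij
      have h1 := hcont y hy i hy' i
      have h2 : f (Function.update y i (y i + δ)) i ≤ f y i + 1 := by
        linarith [(abs_le.mp h1).2]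
      have h3 : ((f (Function.update y i (y i + δ)) i : ℤ) : ℝ) ≤ (f y i : ℤ) + 1 := by
        exact_mod_cast h2
      rw [Function.update_self]
      nlinarith
    · have heq : Function.update y j (y j + δ) i = y i := Function.update_of_ne hij _ _
      have hm := hmono y (Function.update y j (y j + δ)) hy hy' j
        (fun k hk => Function.update_of_ne hk _ _)
        (by rw [Function.update_self]; linarith) i hij
      have hm' : ((f (Function.update y j (y j + δ)) i : ℤ) : ℝ) ≤ (f y i : ℤ) := by
        exact_mod_cast hm
      rw [heq]
      nlinarith
  -- many steps along one coordinate
  have line : ∀ n : ℕ, ∀ j : Fin d, ∀ y, onGrid a b δ y → ∀ z, onGrid a b δ z →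
      (∀ k, k ≠ j → z k = y k) → z j = y j + n * δ →
      ∀ i, y i - δ * f y i ≤ z i - δ * f z i := by
    intro n
    induction n with
    | zero =>
      intro j y hy z hz hsame hj i
      have hzy : z = y := funext fun k => by
        by_cases hk : k = j
        · subst hk; simpa using hj
        · exact hsame k hk
      subst hzy; exact le_refl _
    | succ n ih =>
      intro j y hy z hz hsame hj i
      set w := Function.update y j (y j + δ) with hw
      have hwj : w j = y j + δ := Function.update_self _ _ _
      have hwk : ∀ k, k ≠ j → w k = y k := fun k hk => Function.update_of_ne hk _ _
      have hzjw : z j = w j + n * δ := by rw [hwj, hj]; push_cast; ring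
      have hwg : onGrid a b δ w := by
        intro k
        by_cases hk : k = j
        · subst hk
          obtain ⟨m, hm⟩ := (hy k).1
          refine ⟨⟨m + 1, by rw [hwj, hm]; push_cast; ring⟩, ?_⟩
          have hzb := (hz k).2
          rw [hj] at hzb
          push_cast at hzb
          have hn : (0:ℝ) ≤ (n:ℝ) := Nat.cast_nonneg n
          rw [hwj]; nlinarith
        · rw [hwk k hk]; exact hy k
      calc y i - δ * f y i ≤ w i - δ * f w i := step y hy j hwg i
        _ ≤ z i - δ * f z i :=
          ih j w hwg z hz (fun k hk => (hsame k hk).trans (hwk k hk).symm) hzjw i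
  intro x x' hx hx' hle
  have key : ∀ m : ℕ, onGrid a b δ (fun k : Fin d => if (k:ℕ) < m then x' k else x k) ∧
      ∀ i, x i - δ * f x i ≤ (fun k : Fin d => if (k:ℕ) < m then x' k else x k) i
        - δ * f (fun k : Fin d => if (k:ℕ) < m then x' k else x k) i := by
    intro m
    induction m with
    | zero =>
      have he : (fun k : Fin d => if (k:ℕ) < 0 then x' k else x k) = x :=
        funext fun k => if_neg (Nat.not_lt_zero _)
      rw [he]
      exact ⟨hx, fun i => le_refl _⟩
    | succ m ih =>
      obtain ⟨hg, hch⟩ := ih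
      by_cases hm : m < d
      · set jm : Fin d := ⟨m, hm⟩ with hjm
        set y := (fun k : Fin d => if (k:ℕ) < m then x' k else x k) with hy
        set z := (fun k : Fin d => if (k:ℕ) < m + 1 then x' k else x k) with hz
        have hsame : ∀ k, k ≠ jm → z k = y k := by
          intro k hk
          have hkm : (k:ℕ) ≠ m := fun h => hk (Fin.ext h)
          simp only [z, y]
          rcases lt_or_gt_of_ne hkm with h | h
          · rw [if_pos h, if_pos (by omega)]
          · rw [if_neg (by omega), if_neg (by omega)]
        have hzj : z jm = x' jm := by
          simp only [z]; exact if_pos (Nat.lt_succ_self m)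
        have hyj : y jm = x jm := by
          simp only [y]; exact if_neg (lt_irrefl m)
        obtain ⟨k1, hk1⟩ := (hx jm).1
        obtain ⟨k2, hk2⟩ := (hx' jm).1
        have hk12 : k1 ≤ k2 := by
          have h1 := hle jm
          rw [hk1, hk2] at h1
          have h2 : (k1:ℝ) * δ ≤ (k2:ℝ) * δ := by linarith
          have h3 : (k1:ℝ) ≤ (k2:ℝ) := le_of_mul_le_mul_right h2 hδ
          exact_mod_cast h3
        have hzy : z jm = y jm + ((k2 - k1 : ℕ) : ℝ) * δ := by
          rw [hzj, hyj, hk1, hk2]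
          have hc : ((k2 - k1 : ℕ) : ℝ) = (k2:ℝ) - (k1:ℝ) := by
            push_cast [Nat.cast_sub hk12]; ring
          rw [hc]; ring
        have hzg : onGrid a b δ z := by
          intro k
          simp only [z]
          split_ifs with h
          · exact hx' k
          · exact hx k
        exact ⟨hzg, fun i => le_trans (hch i) (line (k2 - k1) jm y hg z hzg hsame hzy i)⟩
      · have heq : (fun k : Fin d => if (k:ℕ) < m + 1 then x' k else x k)
            = (fun k : Fin d => if (k:ℕ) < m then x' k else x k) := by
          funext k
          have hk : (k:ℕ) < m := lt_of_lt_of_le k.isLt (le_of_not_gt hm)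
          rw [if_pos hk, if_pos (by omega)]
        rw [heq]
        exact ⟨hg, hch⟩
  have hfin := (key d).2
  have hzd : (fun k : Fin d => if (k:ℕ) < d then x' k else x k) = x' :=
    funext fun k => if_pos k.isLt
  rw [hzd] at hfin
  exact hfin
end

section
/- Let d ≥ 2, δ > 0, Z the δ-grid on a box [a,b] ⊆ ℝ^d, and f : Z → {-1,0,1}^d positive-switching with f_i weakly decreasing in x_j for all i ≠ j, and δ-continuous. Then f has a root in Z: there exists a grid point x with f(x) = 0. -/
/-- Theorem 1.5 (discretized form): a positive-switching δ-continuous function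
`f : Z → {-1,0,1}^d` satisfying all `d² - d` ex-diagonal monotonicity
conditions has a root on the grid. -/
theorem root_exists_exdiagonal {d : ℕ} (hd : 2 ≤ d) (δ : ℝ) (hδ : 0 < δ)
    (a b : Fin d → ℝ) (hbox : ∀ i, ∃ m : ℕ, b i = a i + m * δ)
    (f : (Fin d → ℝ) → Fin d → ℤ)
    (hval : ∀ x, onGrid a b δ x → ∀ i, f x i = -1 ∨ f x i = 0 ∨ f x i = 1)
    (hcont : ∀ x, onGrid a b δ x → ∀ j, onGrid a b δ (Function.update x j (x j + δ)) →
      ∀ i, |f (Function.update x j (x j + δ)) i - f x i| ≤ 1)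
    (hmono : ∀ x x', onGrid a b δ x → onGrid a b δ x' →
      ∀ j, (∀ k, k ≠ j → x' k = x k) → x j ≤ x' j → ∀ i, i ≠ j → f x' i ≤ f x i)
    (hswitch : ∀ x, onGrid a b δ x →
      ∀ i, (x i = a i → f x i ≤ 0) ∧ (x i = b i → 0 ≤ f x i)) :
    ∃ x, onGrid a b δ x ∧ ∀ i, f x i = 0 := by
  classical
  choose m hm using hbox
  set X : (Fin d → ℕ) → (Fin d → ℝ) := fun n i => a i + n i * δ with hXdef
  have hXapp : ∀ n i, X n i = a i + n i * δ := fun n i => rfl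
  -- grid membership
  have hgrid : ∀ n : Fin d → ℕ, (∀ i, n i ≤ m i) → onGrid a b δ (X n) := by
    intro n hn i
    refine ⟨⟨n i, rfl⟩, ?_⟩
    rw [hXapp, hm i]
    have h1 : (n i : ℝ) ≤ m i := Nat.cast_le.mpr (hn i)
    nlinarith
  -- Stage A : moving non-i coordinates up weakly decreases f_i
  have stepA : ∀ s : Finset (Fin d), ∀ n n' : Fin d → ℕ,
      (∀ k, n k ≤ n' k) → (∀ k, n' k ≤ m k) → (∀ k, k ∉ s → n k = n' k) →
      ∀ i, n i = n' i → f (X n') i ≤ f (X n) i := by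
    intro s
    induction s using Finset.induction_on with
    | empty =>
      intro n n' _ _ hout i _
      have : n = n' := funext fun k => hout k (Finset.notMem_empty k)
      rw [this]
    | @insert j s hj ih =>
      intro n n' hle hub hout i hi
      clear hj
      set n'' := Function.update n j (n' j) with hn''def
      have hle1 : ∀ k, n k ≤ n'' k := by
        intro k
        by_cases h : k = j
        · rw [h, hn''def, Function.update_self]; exact hle j
        · rw [hn''def, Function.update_of_ne h]
      have hle2 : ∀ k, n'' k ≤ n' k := by
        intro k
        by_cases h : k = j
        · rw [h, hn''def, Function.update_self]
        · rw [hn''def, Function.update_of_ne h]; exact hle k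
      have hub2 : ∀ k, n'' k ≤ m k := fun k => le_trans (hle2 k) (hub k)
      have hout2 : ∀ k, k ∉ s → n'' k = n' k := by
        intro k hk
        by_cases h : k = j
        · rw [h, hn''def, Function.update_self]
        · have hk2 : k ∉ insert j s := by simp [h, hk]
          rw [hn''def, Function.update_of_ne h]; exact hout k hk2
      have hi2 : n'' i = n' i := by
        by_cases h : i = j
        · rw [h, hn''def, Function.update_self]
        · rw [hn''def, Function.update_of_ne h]; exact hi
      have h1 : f (X n') i ≤ f (X n'') i := ih n'' n' hle2 hub hout2 i hi2
      have h2 : f (X n'') i ≤ f (X n) i := by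
        by_cases h : i = j
        · have : n'' = n := by
            funext k
            by_cases hk : k = j
            · rw [hk, hn''def, Function.update_self, ← h, ← hi, h]
            · rw [hn''def, Function.update_of_ne hk]
          rw [this]
        · refine hmono (X n) (X n'') (hgrid n (fun k => le_trans (hle k) (hub k)))
            (hgrid n'' hub2) j ?_ ?_ i h
          · intro k hk
            rw [hXapp, hXapp, hn''def, Function.update_of_ne hk]
          · rw [hXapp, hXapp, hn''def, Function.update_self]
            have : (n j : ℝ) ≤ n' j := Nat.cast_le.mpr (hle j)
            nlinarith
      exact le_trans h1 h2
  -- Stage B : moving the i-th coordinate up by t changes f_i by at most t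
  have stepB : ∀ t : ℕ, ∀ n : Fin d → ℕ, (∀ k, n k ≤ m k) → ∀ i, n i + t ≤ m i →
      f (X (Function.update n i (n i + t))) i ≤ f (X n) i + t := by
    intro t
    induction t with
    | zero =>
      intro n hn i hi
      simp [Function.update_eq_self]
    | succ t ih =>
      intro n hn i hi
      set nt := Function.update n i (n i + t) with hntdef
      have hnt : ∀ k, nt k ≤ m k := by
        intro k
        by_cases h : k = i
        · rw [h, hntdef, Function.update_self]; omega
        · rw [hntdef, Function.update_of_ne h]; exact hn k
      have hnt1 : ∀ k, Function.update n i (n i + (t+1)) k ≤ m k := by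
        intro k
        by_cases h : k = i
        · rw [h, Function.update_self]; omega
        · rw [Function.update_of_ne h]; exact hn k
      have hXeq : Function.update (X nt) i (X nt i + δ) = X (Function.update n i (n i + (t+1))) := by
        funext k
        by_cases h : k = i
        · rw [h, Function.update_self, hXapp, hXapp, hntdef, Function.update_self,
            Function.update_self]
          push_cast; ring
        · rw [Function.update_of_ne h, hXapp, hXapp, hntdef, Function.update_of_ne h,
            Function.update_of_ne h]
      have hcg : onGrid a b δ (Function.update (X nt) i (X nt i + δ)) := by
        rw [hXeq]; exact hgrid _ hnt1
      have h1 := hcont (X nt) (hgrid nt hnt) i hcg i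
      rw [hXeq] at h1
      have h2 := ih n hn i (by omega)
      rw [abs_le] at h1
      push_cast
      push_cast at h2
      linarith [h1.2]
  -- combined monotonicity estimate
  have key : ∀ n n' : Fin d → ℕ, (∀ k, n k ≤ n' k) → (∀ k, n' k ≤ m k) → ∀ i,
      f (X n') i ≤ f (X n) i + ((n' i : ℤ) - n i) := by
    intro n n' hle hub i
    set n'' := Function.update n' i (n i) with hn''def
    have hub2 : ∀ k, n'' k ≤ m k := by
      intro k
      by_cases h : k = i
      · rw [h, hn''def, Function.update_self]; exact le_trans (hle i) (hub i)
      · rw [hn''def, Function.update_of_ne h]; exact hub k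
    have hle2 : ∀ k, n k ≤ n'' k := by
      intro k
      by_cases h : k = i
      · rw [h, hn''def, Function.update_self]
      · rw [hn''def, Function.update_of_ne h]; exact hle k
    have h1 : f (X n'') i ≤ f (X n) i :=
      stepA Finset.univ n n'' hle2 hub2 (fun k hk => absurd (Finset.mem_univ k) hk) i
        (by rw [hn''def, Function.update_self])
    have hrepr : Function.update n'' i (n'' i + (n' i - n i)) = n' := by
      funext k
      by_cases h : k = i
      · rw [h, Function.update_self, hn''def, Function.update_self]
        have := hle i; omega
      · rw [Function.update_of_ne h, hn''def, Function.update_of_ne h]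
    have h2 : f (X (Function.update n'' i (n'' i + (n' i - n i)))) i ≤
        f (X n'') i + ((n' i - n i : ℕ) : ℤ) := by
      refine stepB (n' i - n i) n'' hub2 i ?_
      rw [hn''def, Function.update_self]
      have := hle i; have := hub i; omega
    rw [hrepr] at h2
    have hc : ((n' i - n i : ℕ) : ℤ) = (n' i : ℤ) - n i := by
      have := hle i; omega
    rw [hc] at h2
    linarith
  -- lower and upper bounds for n - f
  have hlow : ∀ n : Fin d → ℕ, (∀ k, n k ≤ m k) → ∀ i, 0 ≤ (n i : ℤ) - f (X n) i := by
    intro n hn i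
    rcases Nat.eq_zero_or_pos (n i) with h0 | h0
    · have hxa : X n i = a i := by rw [hXapp, h0]; push_cast; ring
      have := (hswitch (X n) (hgrid n hn) i).1 hxa
      omega
    · have := hval (X n) (hgrid n hn) i
      omega
  have hhigh : ∀ n : Fin d → ℕ, (∀ k, n k ≤ m k) → ∀ i, (n i : ℤ) - f (X n) i ≤ m i := by
    intro n hn i
    by_cases h0 : n i = m i
    · have hxb : X n i = b i := by rw [hXapp, h0, hm i]
      have := (hswitch (X n) (hgrid n hn) i).2 hxb
      omega
    · have h1 : n i + 1 ≤ m i := by have := hn i; omega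
      have := hval (X n) (hgrid n hn) i
      omega
  -- the Tarski map
  set g : (Fin d → ℕ) → (Fin d → ℕ) := fun n i => ((n i : ℤ) - f (X n) i).toNat with hgdef
  have hgub : ∀ n : Fin d → ℕ, (∀ k, n k ≤ m k) → ∀ k, g n k ≤ m k := by
    intro n hn k
    have : g n k = ((n k : ℤ) - f (X n) k).toNat := rfl
    rw [this, Int.toNat_le]
    exact_mod_cast hhigh n hn k
  have hgmono : ∀ n n' : Fin d → ℕ, (∀ k, n k ≤ n' k) → (∀ k, n' k ≤ m k) →
      ∀ k, g n k ≤ g n' k := by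
    intro n n' hle hub k
    have h := key n n' hle hub k
    exact Int.toNat_le_toNat (by omega)
  -- iterate from the bottom
  set seq : ℕ → (Fin d → ℕ) := fun k => g^[k] (fun _ => 0) with hseqdef
  have hseqsucc : ∀ k, seq (k+1) = g (seq k) := by
    intro k
    rw [hseqdef]
    exact Function.iterate_succ_apply' g k _
  have hbasic : ∀ k, (∀ i, seq k i ≤ m i) ∧ (∀ i, seq k i ≤ seq (k+1) i) := by
    intro k
    induction k with
    | zero =>
      refine ⟨fun i => ?_, fun i => ?_⟩
      · exact Nat.zero_le _
      · exact Nat.zero_le _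
    | succ k ih =>
      have hv : ∀ i, seq (k+1) i ≤ m i := by
        rw [hseqsucc]; exact hgub _ ih.1
      refine ⟨hv, fun i => ?_⟩
      rw [hseqsucc k, hseqsucc (k+1)]
      exact hgmono (seq k) (seq (k+1)) ih.2 hv i
  -- a fixed point exists
  have hfix : ∃ k, seq (k+1) = seq k := by
    by_contra hcon
    push_neg at hcon
    set S : ℕ → ℕ := fun k => ∑ i, seq k i with hSdef
    have hSle : ∀ k, S k ≤ ∑ i, m i := fun k =>
      Finset.sum_le_sum (fun i _ => (hbasic k).1 i)
    have hstrict : ∀ k, S k < S (k+1) := by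
      intro k
      have hle := (hbasic k).2
      have hne : seq k ≠ seq (k+1) := fun h => hcon k h.symm
      refine Finset.sum_lt_sum (fun i _ => hle i) ?_
      rcases Function.ne_iff.mp hne with ⟨i, hi⟩
      exact ⟨i, Finset.mem_univ i, lt_of_le_of_ne (hle i) hi⟩
    have hgrow : ∀ k, k ≤ S k := by
      intro k
      induction k with
      | zero => exact Nat.zero_le _
      | succ k ih => have := hstrict k; omega
    have h1 := hgrow (∑ i, m i + 1)
    have h2 := hSle (∑ i, m i + 1)
    omega
  obtain ⟨k, hk⟩ := hfix
  have hnval : ∀ i, seq k i ≤ m i := (hbasic k).1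
  have hfixed : g (seq k) = seq k := by rw [← hseqsucc]; exact hk
  refine ⟨X (seq k), hgrid (seq k) hnval, fun i => ?_⟩
  have h1 : ((seq k i : ℤ) - f (X (seq k)) i).toNat = seq k i := congrFun hfixed i
  have h2 := hlow (seq k) hnval i
  have h3 := Int.toNat_of_nonneg h2
  rw [h1] at h3
  omega
end
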